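/- Let k be a field of characteristic zero and K a Poisson field over k. If x, y ∈ K are algebraically dependent over k, then {x, y} = 0. -/

import Mathlib

open MvPolynomial

-- coeff of partial derivative
lemma coeff_pderiv' {k : Type*} [CommRing k] {σ : Type*} [DecidableEq σ] (i : σ)
    (p : MvPolynomial σ k) (m : σ →₀ ℕ) :
    coeff m (pderiv i p) = (m i + 1 : ℕ) * coeff (m + Finsupp.single i 1) p := by
  induction p using MvPolynomial.induction_on' with
  | add p q hp hq => simp [hp, hq, mul_add]
  | monomial s a =>
    rw [pderiv_monomial, coeff_monomial, coeff_monomial]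
    by_cases h : s = m + Finsupp.single i 1
    · subst h
      rw [if_pos (add_tsub_cancel_right _ _), if_pos rfl]
      simp [mul_comm]
    · rw [if_neg h]
      by_cases h2 : s - Finsupp.single i 1 = m
      · have hsi : s i = 0 := by
          by_contra hsi
          apply h
          rw [← h2, tsub_add_cancel_of_le]
          rw [Finsupp.single_le_iff]
          omega
        rw [if_pos h2, hsi]
        simp
      · rw [if_neg h2, mul_zero]


lemma totalDegree_pderiv_lt' {k : Type*} [CommRing k] {σ : Type*} [DecidableEq σ] (i : σ)
    (p : MvPolynomial σ k) (hp : 0 < p.totalDegree) :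
    (pderiv i p).totalDegree < p.totalDegree := by
  rw [totalDegree, Finset.sup_lt_iff (by simpa using hp)]
  intro m hm
  rw [mem_support_iff, coeff_pderiv'] at hm
  have h2 : coeff (m + Finsupp.single i 1) p ≠ 0 := fun h => hm (by simp [h])
  have h3 := le_totalDegree (mem_support_iff.2 h2)
  rw [Finsupp.sum_add_index' (fun _ => rfl) (fun _ _ _ => rfl),
    Finsupp.sum_single_index rfl] at h3
  omega

lemma eq_C_of_pderiv_eq_zero' {k : Type*} [Field k] [CharZero k] {σ : Type*} [DecidableEq σ]
    (p : MvPolynomial σ k) (h : ∀ i, pderiv i p = 0) : p = C (p.coeff 0) := by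
  ext m
  rw [coeff_C]
  rcases eq_or_ne (0 : σ →₀ ℕ) m with rfl | hm
  · simp
  · rw [if_neg hm]
    have hm' : m ≠ 0 := fun hh => hm hh.symm
    obtain ⟨i, hi⟩ : ∃ i, m i ≠ 0 := by
      by_contra hc
      push_neg at hc
      exact hm' (Finsupp.ext fun i => hc i)
    have key := coeff_pderiv' i p (m - Finsupp.single i 1)
    rw [h i, coeff_zero] at key
    have hms : m - Finsupp.single i 1 + Finsupp.single i 1 = m :=
      tsub_add_cancel_of_le (by rw [Finsupp.single_le_iff]; omega)
    rw [hms] at key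
    have hne : ((((m - Finsupp.single i 1) : σ →₀ ℕ) i + 1 : ℕ) : k) ≠ 0 := Nat.cast_ne_zero.2 (by omega)
    exact (mul_eq_zero.1 key.symm).resolve_left hne

lemma derivation_aeval_eq' {k K : Type*} [CommRing k] [CommRing K] [Algebra k K]
    {n : ℕ} (D : Derivation k K K) (v : Fin n → K) (p : MvPolynomial (Fin n) k) :
    D (aeval v p) = ∑ i, aeval v (pderiv i p) * D (v i) := by
  induction p using MvPolynomial.induction_on with
  | C a => simp
  | add p q hp hq => simp [hp, hq, add_mul, Finset.sum_add_distrib]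
  | mul_X p j hp =>
    rw [map_mul, aeval_X, Derivation.leibniz, smul_eq_mul, smul_eq_mul, hp]
    have : ∀ i : Fin n, aeval v (pderiv i (p * X j)) * D (v i)
        = aeval v (pderiv i p) * D (v i) * v j
          + (if j = i then aeval v p * D (v i) else 0) := by
      intro i
      rw [pderiv_mul, map_add, map_mul, map_mul, aeval_X, pderiv_X, Pi.single_apply]
      split_ifs with hji
      · subst hji; simp; ring
      · simp; ring
    rw [Finset.sum_congr rfl fun i _ => this i, Finset.sum_add_distrib,
      Finset.sum_ite_eq _ j, if_pos (Finset.mem_univ j), ← Finset.sum_mul]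
    ring

open MvPolynomial




/-- A Poisson bracket on a commutative algebra `A` over `k`: a `k`-bilinear
antisymmetric bracket satisfying the Jacobi identity and the Leibniz rule.
A *Poisson field* is a field equipped with such a bracket. -/
structure PoissonBracket (k A : Type*) [CommRing k] [CommRing A] [Algebra k A] where
  bracket : A → A → A
  add_left : ∀ a b c : A, bracket (a + b) c = bracket a c + bracket b c
  smul_left : ∀ (r : k) (a b : A), bracket (r • a) b = r • bracket a b
  antisymm : ∀ a b : A, bracket a b = - bracket b a
  leibniz : ∀ a b c : A, bracket a (b * c) = bracket a b * c + bracket a c * b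
  jacobi : ∀ a b c : A,
    bracket a (bracket b c) + bracket b (bracket c a) + bracket c (bracket a b) = 0

noncomputable def PoissonBracket.deriv {k K : Type*} [CommRing k] [CommRing K] [Algebra k K]
    (P : PoissonBracket k K) (x : K) : Derivation k K K where
  toFun := P.bracket x
  map_add' a b := by
    rw [P.antisymm x (a + b), P.add_left, neg_add, ← P.antisymm, ← P.antisymm]
  map_smul' r a := by
    show P.bracket x (r • a) = r • P.bracket x a
    rw [P.antisymm x (r • a), P.smul_left, ← smul_neg, ← P.antisymm]
  map_one_eq_zero' := by
    have h := P.leibniz x 1 1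
    simp only [mul_one] at h
    simpa using h
  leibniz' a b := by
    show P.bracket x (a * b) = a • P.bracket x b + b • P.bracket x a
    rw [P.leibniz, smul_eq_mul, smul_eq_mul]
    ring


/-- over a field `k` of characteristic zero, if two elements `x, y`
of a Poisson field `K` are algebraically dependent over `k`, then `{x, y} = 0`. -/
theorem stmt3 (k K : Type*) [Field k] [CharZero k] [Field K] [Algebra k K]
    (P : PoissonBracket k K) (x y : K)
    (hdep : ¬ AlgebraicIndependent k ![x, y]) :
    P.bracket x y = 0 := by
  haveI : CharZero K := charZero_of_injective_algebraMap (algebraMap k K).injective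
  by_contra hxy
  rw [algebraicIndependent_iff] at hdep
  push_neg at hdep
  obtain ⟨p₀, hp₀z, hp₀⟩ := hdep
  have hex : ∃ n, ∃ p : MvPolynomial (Fin 2) k,
      p ≠ 0 ∧ aeval ![x, y] p = 0 ∧ p.totalDegree = n := ⟨_, p₀, hp₀, hp₀z, rfl⟩
  classical
  obtain ⟨p, hp, haev, hdeg⟩ := Nat.find_spec hex
  set n := Nat.find hex with hn
  -- bracket of x with itself / y with itself vanish
  have hself : ∀ a : K, P.bracket a a = 0 := by
    intro a
    have h := P.antisymm a a
    have h2 : (2 : K) * P.bracket a a = 0 := by linear_combination h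
    rcases mul_eq_zero.1 h2 with h3 | h3
    · exact absurd h3 two_ne_zero
    · exact h3
  -- chain rule for both derivations
  have hv0 : (![x, y] : Fin 2 → K) 0 = x := rfl
  have hv1 : (![x, y] : Fin 2 → K) 1 = y := rfl
  have hx := derivation_aeval_eq' (P.deriv x) ![x, y] p
  have hy := derivation_aeval_eq' (P.deriv y) ![x, y] p
  rw [haev, map_zero, Fin.sum_univ_two, hv0, hv1] at hx hy
  have hDx : ∀ a, P.deriv x a = P.bracket x a := fun _ => rfl
  have hDy : ∀ a, P.deriv y a = P.bracket y a := fun _ => rfl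
  simp only [hDx, hself x, mul_zero, zero_add] at hx
  simp only [hDy, hself y, mul_zero, add_zero] at hy
  -- both partial derivatives evaluate to zero
  have h1 : aeval ![x, y] (pderiv 1 p) = 0 := by
    rcases mul_eq_zero.1 hx.symm with h | h
    · exact h
    · exact absurd h hxy
  have h0 : aeval ![x, y] (pderiv 0 p) = 0 := by
    rcases mul_eq_zero.1 hy.symm with h | h
    · exact h
    · rw [P.antisymm y x, neg_eq_zero] at h
      exact absurd h hxy
  -- minimality forces the partial derivatives to vanish identically
  have hpd : ∀ i : Fin 2, pderiv i p = 0 := by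
    intro i
    by_contra hne
    have hpos : 0 < p.totalDegree := by
      rcases Nat.eq_zero_or_pos p.totalDegree with h | h
      · exfalso
        apply hne
        ext m
        rw [coeff_pderiv', coeff_zero]
        have hz := (totalDegree_eq_zero_iff _ p).1 h
        have : coeff (m + Finsupp.single i 1) p = 0 := by
          rw [← notMem_support_iff]
          intro hmem
          have := hz _ hmem i
          simp at this
        rw [this, mul_zero]
      · exact h
    have hlt : (pderiv i p).totalDegree < n :=
      hdeg ▸ totalDegree_pderiv_lt' i p hpos
    have : aeval ![x, y] (pderiv i p) = 0 := by
      fin_cases i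
      · exact h0
      · exact h1
    exact Nat.find_min hex hlt ⟨pderiv i p, hne, this, rfl⟩
  -- char 0: p is constant, contradiction
  have hc := eq_C_of_pderiv_eq_zero' p hpd
  rw [hc] at haev hp
  rw [aeval_C] at haev
  have : p.coeff 0 = 0 := by
    have := (algebraMap k K).injective
    exact this (by simpa using haev)
  rw [this] at hp
  simp at hp
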